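/- Let w and r be integers with 1 ≤ w < r, and suppose that gcd(p, r) = 1 for every prime p ≤ w. Then r divides the binomial coefficient C(r, w). -/

import Mathlib

theorem stmt_0 (w r : ℕ) (hw : 1 ≤ w) (hwr : w < r)
    (h : ∀ p : ℕ, p.Prime → p ≤ w → Nat.Coprime p r) :
    r ∣ Nat.choose r w := by
  have hr : 1 ≤ r := hw.trans hwr.le
  have hcop : Nat.Coprime r w := by
    rw [Nat.coprime_comm]
    by_contra hc
    obtain ⟨p, hp, hpd⟩ := Nat.exists_prime_and_dvd hc
    have hpw : p ∣ w := hpd.trans (Nat.gcd_dvd_left _ _)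
    have hpr : p ∣ r := hpd.trans (Nat.gcd_dvd_right _ _)
    have hle : p ≤ w := Nat.le_of_dvd hw hpw
    have h1 : Nat.gcd p r = p := Nat.gcd_eq_left hpr
    have h2 : Nat.gcd p r = 1 := h p hp hle
    exact hp.one_lt.ne' (h1.symm.trans h2)
  have key : r * Nat.choose (r - 1) (w - 1) = Nat.choose r w * w := by
    have := Nat.add_one_mul_choose_eq (r - 1) (w - 1)
    have e1 : r - 1 + 1 = r := by omega
    have e2 : w - 1 + 1 = w := by omega
    rwa [e1, e2] at this
  exact hcop.dvd_of_dvd_mul_right ⟨_, key.symm⟩
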